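/- Let G = (V, E) and G' = (V, E ∪ {(a,b)}) (or E \ {(a,b)}) differ in a single edge (a,b) with π(a) < π(b), for an injective ranking π. Let A be the set of vertices whose eliminator differs between LFMIS(G, π) and LFMIS(G', π). Then every v ∈ A satisfies π(elim_G(v)) ≥ π(a) and π(elim_{G'}(v)) ≥ π(a). -/
import Mathlib


open scoped Classical

variable {V : Type*}

/-- The lexicographically first maximal independent set under ranking `π`:
`v` is in the LFMIS iff no neighbor of strictly smaller rank is in the LFMIS. -/
noncomputable def lfmis [Fintype V] (G : SimpleGraph V) (π : V → ℝ) : V → Prop :=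
  fun v => ∀ u, G.Adj u v → π u < π v → ¬ lfmis G π u
termination_by v => (Finset.univ.filter fun u => π u < π v).card
decreasing_by
  rename_i u _ hlt
  apply Finset.card_lt_card
  constructor
  · intro w hw
    simp only [Finset.mem_filter, Finset.mem_univ, true_and] at hw ⊢
    exact hw.trans hlt
  · intro hsub
    have := hsub (Finset.mem_filter.mpr ⟨Finset.mem_univ u, hlt⟩)
    simp only [Finset.mem_filter, Finset.mem_univ, true_and] at this
    exact lt_irrefl _ this

/-- The eliminator of `v`: the minimum-rank vertex of `(N(v) ∪ {v}) ∩ LFMIS(G, π)`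
(when it exists; otherwise `v` by convention). -/
noncomputable def eliminator [Fintype V] (G : SimpleGraph V) (π : V → ℝ) (v : V) : V :=
  if h : ∃ e, (e = v ∨ G.Adj e v) ∧ lfmis G π e ∧
      ∀ u, (u = v ∨ G.Adj u v) → lfmis G π u → π e ≤ π u
  then h.choose else v

lemma lfmis_iff [Fintype V] (G : SimpleGraph V) (π : V → ℝ) (v : V) :
    lfmis G π v ↔ ∀ u, G.Adj u v → π u < π v → ¬ lfmis G π u := by
  rw [lfmis]

lemma lfmis_agree [Fintype V] {G G' : SimpleGraph V} {π : V → ℝ} {b : V}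
    (hE : ∀ u w, π u < π b → π w < π b → (G.Adj u w ↔ G'.Adj u w)) :
    ∀ v, π v < π b → (lfmis G π v ↔ lfmis G' π v) := by
  have key : ∀ n : ℕ, ∀ v, (Finset.univ.filter fun u => π u < π v).card = n →
      π v < π b → (lfmis G π v ↔ lfmis G' π v) := by
    intro n
    induction n using Nat.strong_induction_on with
    | _ n ih =>
      intro v hn hvb
      have hcard : ∀ u, π u < π v →
          (Finset.univ.filter fun w => π w < π u).card < n := by
        intro u hu
        rw [← hn]
        apply Finset.card_lt_card
        constructor
        · intro w hw
          simp only [Finset.mem_filter, Finset.mem_univ, true_and] at hw ⊢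
          exact hw.trans hu
        · intro hsub
          have := hsub (Finset.mem_filter.mpr ⟨Finset.mem_univ u, hu⟩)
          simp only [Finset.mem_filter, Finset.mem_univ, true_and] at this
          exact lt_irrefl _ this
      rw [lfmis_iff, lfmis_iff]
      constructor
      · intro h u hadj hlt hu
        have hub : π u < π b := hlt.trans hvb
        have hadjG : G.Adj u v := (hE u v hub hvb).mpr hadj
        exact h u hadjG hlt ((ih _ (hcard u hlt) u rfl hub).mpr hu)
      · intro h u hadj hlt hu
        have hub : π u < π b := hlt.trans hvb
        have hadjG' : G'.Adj u v := (hE u v hub hvb).mp hadj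
        exact h u hadjG' hlt ((ih _ (hcard u hlt) u rfl hub).mp hu)
  intro v hv
  exact key _ v rfl hv

lemma eliminator_exists [Fintype V] (G : SimpleGraph V) (π : V → ℝ) (v : V) :
    ∃ e, (e = v ∨ G.Adj e v) ∧ lfmis G π e ∧
      ∀ u, (u = v ∨ G.Adj u v) → lfmis G π u → π e ≤ π u := by
  classical
  set S := Finset.univ.filter fun u => (u = v ∨ G.Adj u v) ∧ lfmis G π u with hS
  have hne : S.Nonempty := by
    by_cases hv : lfmis G π v
    · exact ⟨v, Finset.mem_filter.mpr ⟨Finset.mem_univ _, Or.inl rfl, hv⟩⟩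
    · rw [lfmis_iff] at hv
      push_neg at hv
      obtain ⟨u, hadj, _, hu⟩ := hv
      exact ⟨u, Finset.mem_filter.mpr ⟨Finset.mem_univ _, Or.inr hadj, hu⟩⟩
  obtain ⟨e, heS, hemin⟩ := S.exists_min_image π hne
  rw [hS, Finset.mem_filter] at heS
  refine ⟨e, heS.2.1, heS.2.2, fun u hu hlf => ?_⟩
  exact hemin u (Finset.mem_filter.mpr ⟨Finset.mem_univ _, hu, hlf⟩)

lemma eliminator_spec [Fintype V] (G : SimpleGraph V) (π : V → ℝ) (v : V) :
    (eliminator G π v = v ∨ G.Adj (eliminator G π v) v) ∧ lfmis G π (eliminator G π v) ∧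
      ∀ u, (u = v ∨ G.Adj u v) → lfmis G π u → π (eliminator G π v) ≤ π u := by
  rw [eliminator, dif_pos (eliminator_exists G π v)]
  exact (eliminator_exists G π v).choose_spec

lemma eliminator_unique [Fintype V] (G : SimpleGraph V) (π : V → ℝ)
    (hπ : Function.Injective π) (v e : V)
    (h : (e = v ∨ G.Adj e v) ∧ lfmis G π e ∧
      ∀ u, (u = v ∨ G.Adj u v) → lfmis G π u → π e ≤ π u) :
    eliminator G π v = e := by
  obtain ⟨hm, hl, hmin⟩ := eliminator_spec G π v
  exact hπ (le_antisymm (hmin e h.1 h.2.1) (h.2.2 _ hm hl))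

lemma eliminator_stable [Fintype V] {G G' : SimpleGraph V} {π : V → ℝ}
    (hπ : Function.Injective π) {a b : V} (hab : π a < π b)
    (hE : ∀ u w, ¬((u = a ∧ w = b) ∨ (u = b ∧ w = a)) → (G.Adj u w ↔ G'.Adj u w))
    (v : V) (h : π (eliminator G π v) < π a) : eliminator G' π v = eliminator G π v := by
  set e := eliminator G π v with he
  obtain ⟨hmem, hlf, hmin⟩ := eliminator_spec G π v
  rw [← he] at hmem hlf hmin
  have hEb : ∀ u w, π u < π b → π w < π b → (G.Adj u w ↔ G'.Adj u w) := by
    intro u w hu hw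
    apply hE
    rintro (⟨rfl, rfl⟩ | ⟨rfl, rfl⟩) <;> exact lt_irrefl _ (by assumption)
  have heb : π e < π b := h.trans hab
  have hea : e ≠ a := fun h' => lt_irrefl _ (h' ▸ h)
  have heb' : e ≠ b := fun h' => lt_irrefl _ (h' ▸ heb)
  apply eliminator_unique G' π hπ v e
  refine ⟨?_, (lfmis_agree hEb e heb).mp hlf, ?_⟩
  · rcases hmem with h' | h'
    · exact Or.inl h'
    · refine Or.inr ((hE e v ?_).mp h')
      rintro (⟨rfl, rfl⟩ | ⟨rfl, rfl⟩)
      · exact hea rfl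
      · exact heb' rfl
  · intro u hu hlfu
    by_contra hlt
    push_neg at hlt
    have hua : π u < π a := hlt.trans h
    have hub : π u < π b := hua.trans hab
    have huna : u ≠ a := fun h' => lt_irrefl _ (h' ▸ hua)
    have hunb : u ≠ b := fun h' => lt_irrefl _ (h' ▸ hub)
    have hlfGu : lfmis G π u := (lfmis_agree hEb u hub).mpr hlfu
    have hcand : u = v ∨ G.Adj u v := by
      rcases hu with h' | h'
      · exact Or.inl h'
      · refine Or.inr ((hE u v ?_).mpr h')
        rintro (⟨rfl, rfl⟩ | ⟨rfl, rfl⟩)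
        · exact huna rfl
        · exact hunb rfl
    exact absurd (hmin u hcand hlfGu) (not_le.mpr hlt)

/-- If `G` and `G'` differ in the single edge `(a,b)` with `π a < π b`, then every
vertex whose eliminator differs between `LFMIS(G,π)` and `LFMIS(G',π)` has both of
its eliminators of rank at least `π a`. -/
theorem affected_eliminator_rank_ge [Fintype V] (G G' : SimpleGraph V) (π : V → ℝ)
    (hπ : Function.Injective π) (a b : V) (hab : π a < π b)
    (hdiff :
      (∀ u w, G'.Adj u w ↔ (G.Adj u w ∨ (u = a ∧ w = b) ∨ (u = b ∧ w = a))) ∨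
      (∀ u w, G'.Adj u w ↔ (G.Adj u w ∧ ¬ ((u = a ∧ w = b) ∨ (u = b ∧ w = a))))) :
    ∀ v, eliminator G π v ≠ eliminator G' π v →
      π a ≤ π (eliminator G π v) ∧ π a ≤ π (eliminator G' π v) := by
  have hE : ∀ u w, ¬((u = a ∧ w = b) ∨ (u = b ∧ w = a)) → (G.Adj u w ↔ G'.Adj u w) := by
    intro u w hne
    rcases hdiff with hd | hd <;> rw [hd u w] <;> tauto
  have hE' : ∀ u w, ¬((u = a ∧ w = b) ∨ (u = b ∧ w = a)) → (G'.Adj u w ↔ G.Adj u w) :=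
    fun u w hne => (hE u w hne).symm
  intro v hne
  constructor
  · by_contra h
    push_neg at h
    exact hne (eliminator_stable hπ hab hE v h).symm
  · by_contra h
    push_neg at h
    exact hne (eliminator_stable hπ hab hE' v h)
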